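/- Suppose x* ∈ {0,1}^n is a feasible solution of the fractional knapsack problem and there exist indices i, j with x*_i = 1, x*_j = 0, and p_i/c_i < p_j/c_j. Then x* is not optimal. -/

import Mathlib

def FKP.Feasible {n : ℕ} (c : Fin n → ℝ) (b : ℝ) (x : Fin n → ℝ) : Prop :=
  (∀ i, 0 ≤ x i ∧ x i ≤ 1) ∧ ∑ i, c i * x i ≤ b

def FKP.Optimal {n : ℕ} (p c : Fin n → ℝ) (b : ℝ) (x : Fin n → ℝ) : Prop :=
  FKP.Feasible c b x ∧ ∀ y, FKP.Feasible c b y → ∑ i, p i * y i ≤ ∑ i, p i * x i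

/-- Necessity of the ratio condition: if a chosen item has a strictly smaller
profit/cost ratio than a rejected item, the 0-1 solution is not optimal. -/
theorem fkp_ratio_violation_not_optimal {n : ℕ} (p c : Fin n → ℝ) (b : ℝ)
    (hp : ∀ k, 0 < p k) (hc : ∀ k, 0 < c k) (hb : 0 < b)
    (xstar : Fin n → ℝ) (hx : ∀ k, xstar k = 0 ∨ xstar k = 1)
    (hfeas : FKP.Feasible c b xstar)
    (hij : ∃ i j, xstar i = 1 ∧ xstar j = 0 ∧ p i / c i < p j / c j) :
    ¬ FKP.Optimal p c b xstar := by
  obtain ⟨i, j, hi, hj, hratio⟩ := hij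
  have hne : i ≠ j := by
    intro h; rw [h, hj] at hi; norm_num at hi
  have hci := hc i
  have hcj := hc j
  set ε : ℝ := min 1 (c j / c i) with hεdef
  have hε : 0 < ε := lt_min one_pos (div_pos hcj hci)
  have hε1 : ε ≤ 1 := min_le_left _ _
  have hε2 : ε * c i ≤ c j := by
    have : ε ≤ c j / c i := min_le_right _ _
    calc ε * c i ≤ (c j / c i) * c i := by nlinarith
    _ = c j := by field_simp
  set y : Fin n → ℝ := fun k =>
    xstar k + (if k = i then -ε else if k = j then ε * c i / c j else 0) with hy
  have key : ∀ f : Fin n → ℝ,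
      ∑ k, f k * y k = ∑ k, f k * xstar k + (f j * (ε * c i / c j) - f i * ε) := by
    intro f
    have : ∀ k, f k * y k = f k * xstar k
        + ((if k = i then f k * (-ε) else 0) + (if k = j then f k * (ε * c i / c j) else 0)) := by
      intro k
      by_cases h1 : k = i
      · subst h1; simp [hy, hne, mul_add]
      · by_cases h2 : k = j
        · subst h2; simp [hy, h1, mul_add]
        · simp [hy, h1, h2]
    rw [Finset.sum_congr rfl fun k _ => this k]
    rw [Finset.sum_add_distrib, Finset.sum_add_distrib]
    simp [Finset.sum_ite_eq']
    ring
  have hyi : y i = 1 - ε := by simp [hy, hi]; ring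
  have hyj : y j = ε * c i / c j := by simp [hy, hne.symm, hj]
  have hyk : ∀ k, k ≠ i → k ≠ j → y k = xstar k := by
    intro k h1 h2; simp [hy, h1, h2]
  have hfy : FKP.Feasible c b y := by
    constructor
    · intro k
      by_cases h1 : k = i
      · subst h1
        rw [hyi]
        constructor <;> linarith
      · by_cases h2 : k = j
        · rw [h2, hyj]
          have h3 : 0 < ε * c i / c j := by positivity
          have h4 : ε * c i / c j ≤ 1 := by
            rw [div_le_one hcj]; exact hε2
          constructor <;> linarith
        · rw [hyk k h1 h2]; exact hfeas.1 k
    · rw [key c]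
      have : c j * (ε * c i / c j) - c i * ε = 0 := by field_simp; ring
      rw [this]
      simpa using hfeas.2
  intro hopt
  have hle := hopt.2 y hfy
  rw [key p] at hle
  have hgain : 0 < p j * (ε * c i / c j) - p i * ε := by
    have h1 : p i * ε = (p i / c i) * (ε * c i) := by field_simp
    have h2 : p j * (ε * c i / c j) = (p j / c j) * (ε * c i) := by field_simp
    rw [h1, h2]
    have hpos : 0 < ε * c i := by positivity
    nlinarith
  linarith
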